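/- Let G be a nilpotent subgroup of the isometry group Isom(ℝ^l) of Euclidean space ℝ^l, and let (A, x) and (B, y) be two elements of G. Then (A, x) and (B, y) commute in Isom(ℝ^l) if and only if A and B commute in O(l). -/

import Mathlib

open scoped RealInnerProductSpace
open scoped commutatorElement

lemma stmt2_fix_of_iter {E : Type*} [NormedAddCommGroup E] [InnerProductSpace ℝ E]
    (A : E ≃ₗᵢ[ℝ] E) :
    ∀ (n : ℕ) (t : E), (fun u => u - A u)^[n] t = 0 → A t = t := by
  intro n
  induction n with
  | zero => intro t ht; simp at ht; simp [ht]
  | succ n ih =>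
    intro t ht
    rw [Function.iterate_succ_apply] at ht
    have h2 := ih _ ht
    set w := t - A t with hw
    have h3 : ⟪A t, w⟫ = ⟪t, w⟫ := by
      conv_lhs => rw [← h2]
      rw [A.inner_map_map]
    have hww : ⟪w, w⟫ = 0 := by
      have : ⟪w, w⟫ = ⟪t, w⟫ - ⟪A t, w⟫ := by rw [hw, inner_sub_left]
      rw [h3] at this
      simpa using this
    have : w = 0 := by rwa [inner_self_eq_zero] at hww
    exact (sub_eq_zero.mp this).symm

lemma stmt2_inv_apply {E : Type*} [NormedAddCommGroup E] [InnerProductSpace ℝ E]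
    (g : E ≃ᵢ E) (A : E ≃ₗᵢ[ℝ] E) (x : E) (hgA : ∀ v, g v = A v + x) (v : E) :
    g⁻¹ v = A.symm (v - x) := by
  apply g.injective
  rw [g.apply_inv_self, hgA]
  simp

/-- commutator of a translation with an affine isometry is a translation. -/
lemma stmt2_comm_trans {E : Type*} [NormedAddCommGroup E] [InnerProductSpace ℝ E]
    (k p : E ≃ᵢ E) (s : E) (P : E ≃ₗᵢ[ℝ] E) (a : E)
    (hk : ∀ v, k v = v + s) (hp : ∀ v, p v = P v + a) (v : E) :
    ⁅k, p⁆ v = v + (s - P s) := by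
  have hkinv : ∀ v, k⁻¹ v = v - s := by
    intro v; apply k.injective; rw [k.apply_inv_self, hk]; abel
  show k (p (k⁻¹ (p⁻¹ v))) = v + (s - P s)
  rw [stmt2_inv_apply p P a hp, hkinv, hp, hk, map_sub P, P.apply_symm_apply]
  abel

/-- If `G` is a nilpotent subgroup of `Isom(ℝˡ)` and `g = (A, x)`, `h = (B, y)` are two
elements of `G` (so `g v = A v + x` and `h v = B v + y` with `A, B ∈ O(l)`), then `g` and `h`
commute if and only if `A` and `B` commute. -/
theorem stmt_2 (l : ℕ)
    (G : Subgroup (EuclideanSpace ℝ (Fin l) ≃ᵢ EuclideanSpace ℝ (Fin l)))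
    (hG : Group.IsNilpotent G)
    (g h : EuclideanSpace ℝ (Fin l) ≃ᵢ EuclideanSpace ℝ (Fin l))
    (hg : g ∈ G) (hh : h ∈ G)
    (A B : EuclideanSpace ℝ (Fin l) ≃ₗᵢ[ℝ] EuclideanSpace ℝ (Fin l))
    (x y : EuclideanSpace ℝ (Fin l))
    (hgA : ∀ v, g v = A v + x) (hhB : ∀ v, h v = B v + y) :
    g * h = h * g ↔ ∀ v, A (B v) = B (A v) := by
  constructor
  · -- easy direction
    intro hc
    have e1 : ∀ v, A (B v) + A y + x = B (A v) + B x + y := by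
      intro v
      have h0 : (g * h) v = (h * g) v := by rw [hc]
      rwa [IsometryEquiv.mul_apply, IsometryEquiv.mul_apply, hgA, hhB, hgA, hhB,
        map_add, map_add] at h0
    have e0 : A y + x = B x + y := by
      have := e1 0
      simpa using this
    intro v
    have h1 : A (B v) + (A y + x) = B (A v) + (B x + y) := by
      rw [← add_assoc, ← add_assoc]; exact e1 v
    rw [e0] at h1
    exact add_right_cancel h1
  · intro hAB
    set t := A y + x - (B x + y) with ht
    set g' : G := ⟨g, hg⟩ with hg'
    set h' : G := ⟨h, hh⟩ with hh'
    -- the commutator of g and h is the translation by t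
    have hcomm : ∀ v, ⁅g, h⁆ v = v + t := by
      intro v
      show g (h (g⁻¹ (h⁻¹ v))) = v + t
      rw [stmt2_inv_apply h B y hhB, stmt2_inv_apply g A x hgA, hhB, hgA, map_add,
        hAB, A.apply_symm_apply, map_sub B, B.apply_symm_apply, ht]
      abel
    obtain ⟨n, hn⟩ := nilpotent_iff_lowerCentralSeries.mp hG
    -- generic step: iterated commutators with an element p = (P, a) of G
    have key : ∀ (p : EuclideanSpace ℝ (Fin l) ≃ᵢ EuclideanSpace ℝ (Fin l)) (hp : p ∈ G) (P : EuclideanSpace ℝ (Fin l) ≃ₗᵢ[ℝ] EuclideanSpace ℝ (Fin l)) (a : EuclideanSpace ℝ (Fin l)),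
        (∀ v, p v = P v + a) →
        ∀ k : ℕ, ∃ c : G, c ∈ lowerCentralSeries (⊤ : Subgroup G) (k + 1) ∧
          ∀ v, (c : EuclideanSpace ℝ (Fin l) ≃ᵢ EuclideanSpace ℝ (Fin l)) v = v + (fun u => u - P u)^[k] t := by
      intro p hpG P a hpP k
      induction k with
      | zero =>
        refine ⟨⁅g', h'⁆, Subgroup.commutator_mem_commutator (Subgroup.mem_top g')
          (Subgroup.mem_top h'), ?_⟩
        intro v
        have : ((⁅g', h'⁆ : G) : EuclideanSpace ℝ (Fin l) ≃ᵢ EuclideanSpace ℝ (Fin l)) = ⁅g, h⁆ := rfl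
        rw [this]
        simpa using hcomm v
      | succ k ih =>
        obtain ⟨c, hcmem, hcval⟩ := ih
        refine ⟨⁅c, ⟨p, hpG⟩⁆, Subgroup.commutator_mem_commutator hcmem
          (Subgroup.mem_top _), ?_⟩
        intro v
        have hco : ((⁅c, (⟨p, hpG⟩ : G)⁆ : G) : EuclideanSpace ℝ (Fin l) ≃ᵢ EuclideanSpace ℝ (Fin l)) = ⁅(c : EuclideanSpace ℝ (Fin l) ≃ᵢ EuclideanSpace ℝ (Fin l)), p⁆ := rfl
        rw [hco, stmt2_comm_trans (c : EuclideanSpace ℝ (Fin l) ≃ᵢ EuclideanSpace ℝ (Fin l)) p ((fun u => u - P u)^[k] t) P a hcval hpP,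
          Function.iterate_succ_apply']
    -- conclude A t = t
    have fixAt : A t = t := by
      obtain ⟨c, hcmem, hcval⟩ := key g hg A x hgA n
      have hc1 : c = 1 := by
        have := lowerCentralSeries_antitone _ (Nat.le_succ n) hcmem
        rw [hn] at this
        exact Subgroup.mem_bot.mp this
      have := hcval 0
      rw [hc1] at this
      simp at this
      exact stmt2_fix_of_iter A n t this.symm
    have fixBt : B t = t := by
      obtain ⟨c, hcmem, hcval⟩ := key h hh B y hhB n
      have hc1 : c = 1 := by
        have := lowerCentralSeries_antitone _ (Nat.le_succ n) hcmem
        rw [hn] at this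
        exact Subgroup.mem_bot.mp this
      have := hcval 0
      rw [hc1] at this
      simp at this
      exact stmt2_fix_of_iter B n t this.symm
    -- t = 0
    have ht0 : t = 0 := by
      have h1 : ⟪A y, t⟫ = ⟪y, t⟫ := by
        conv_lhs => rw [← fixAt]
        rw [A.inner_map_map]
      have h2 : ⟪B x, t⟫ = ⟪x, t⟫ := by
        conv_lhs => rw [← fixBt]
        rw [B.inner_map_map]
      have htt : ⟪t, t⟫ = 0 := by
        have : ⟪t, t⟫ = ⟪A y, t⟫ + ⟪x, t⟫ - (⟪B x, t⟫ + ⟪y, t⟫) := by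
          rw [ht, inner_sub_left, inner_add_left, inner_add_left]
        rw [h1, h2] at this
        linarith [this]
      rwa [inner_self_eq_zero] at htt
    have e0 : A y + x = B x + y := by
      have := sub_eq_zero.mp ht0
      exact this
    refine IsometryEquiv.ext fun v => ?_
    rw [IsometryEquiv.mul_apply, IsometryEquiv.mul_apply, hgA, hhB, hgA, hhB,
      map_add, map_add, hAB, add_assoc, add_assoc, e0]
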